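/- The Cramér series function λ(τ) = τ^{−3} (K(z₀(τ)) − τ z₀(τ) + τ²/2) (extended analytically at τ = 0) satisfies |λ(τ)| ≤ 700 α^{−3} for all |τ| ≤ α³/64. -/

import Mathlib

open MeasureTheory ProbabilityTheory

section auxx

lemma aux_le_exp {t : ℝ} (ht : 0 ≤ t) : t ≤ Real.exp t :=
  le_trans (by linarith) (Real.add_one_le_exp t)

lemma aux_sq_le {t : ℝ} (ht : 0 ≤ t) : t ^ 2 ≤ 2 * Real.exp t := by
  nlinarith [Real.quadratic_le_exp_of_nonneg ht]

lemma aux_mul1 {t : ℝ} (ht : 0 ≤ t) : t * Real.exp (9 * t / 16) ≤ 3 * Real.exp t := by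
  have h1 : 7 * t / 16 ≤ Real.exp (7 * t / 16) := aux_le_exp (by linarith)
  have h2 : Real.exp (7 * t / 16) * Real.exp (9 * t / 16) = Real.exp t := by
    rw [← Real.exp_add]; ring_nf
  nlinarith [Real.exp_pos (9 * t / 16), Real.exp_pos (7 * t / 16)]

lemma aux_mul2 {t : ℝ} (ht : 0 ≤ t) : t ^ 2 * Real.exp (t / 16) ≤ 3 * Real.exp t := by
  have h1 := Real.quadratic_le_exp_of_nonneg (show (0:ℝ) ≤ 15 * t / 16 by linarith)
  have h2 : Real.exp (15 * t / 16) * Real.exp (t / 16) = Real.exp t := by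
    rw [← Real.exp_add]; ring_nf
  nlinarith [Real.exp_pos (t / 16), Real.exp_pos (15 * t / 16)]

lemma aux_mul3 {t : ℝ} (ht : 0 ≤ t) : t ^ 3 * Real.exp (t / 16) ≤ 8 * Real.exp t := by
  have h1 := Real.sum_le_exp_of_nonneg (show (0:ℝ) ≤ 15 * t / 16 by linarith) 4
  norm_num [Finset.sum_range_succ, Nat.factorial] at h1
  have h2 : Real.exp (15 * t / 16) * Real.exp (t / 16) = Real.exp t := by
    rw [← Real.exp_add]; ring_nf
  nlinarith [Real.exp_pos (t / 16), Real.exp_pos (15 * t / 16)]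

lemma aux_cexp_rem (w : ℂ) :
    ‖Complex.exp w - 1 - w‖ ≤ 2 * ‖w‖ ^ 2 * Real.exp ‖w‖ := by
  rcases le_or_gt ‖w‖ 1 with h | h
  · have h1 : ‖Complex.exp w - 1 - w‖ ≤ ‖w‖ ^ 2 := by
      simpa using Complex.norm_exp_sub_one_sub_id_le (by
        simpa using h)
    have h2 : (1:ℝ) ≤ Real.exp ‖w‖ := Real.one_le_exp (norm_nonneg w)
    nlinarith [sq_nonneg ‖w‖]
  · have h1 : ‖Complex.exp w - 1 - w‖ ≤ ‖Complex.exp w‖ + (1 + ‖w‖) := by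
      calc ‖Complex.exp w - 1 - w‖ = ‖Complex.exp w - (1 + w)‖ := by ring_nf
        _ ≤ ‖Complex.exp w‖ + ‖1 + w‖ := norm_sub_le _ _
        _ ≤ ‖Complex.exp w‖ + (‖(1:ℂ)‖ + ‖w‖) := by gcongr; exact norm_add_le _ _
        _ = ‖Complex.exp w‖ + (1 + ‖w‖) := by norm_num
    have h2 : ‖Complex.exp w‖ ≤ Real.exp ‖w‖ := by
      rw [Complex.norm_exp]
      exact Real.exp_le_exp.2 (Complex.re_le_norm w)
    have h3 : 1 + ‖w‖ ≤ Real.exp ‖w‖ := by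
      have := Real.add_one_le_exp ‖w‖; linarith
    have h4 : 1 ≤ ‖w‖ ^ 2 := by nlinarith
    nlinarith [Real.exp_pos ‖w‖, mul_le_mul_of_nonneg_left h4 (Real.exp_pos ‖w‖).le]

lemma aux_const {a u s : ℝ} (ha : 0 < a) (ha4 : a ^ 4 ≤ 4) (hu0 : 0 ≤ u)
    (hu32 : u ≤ a ^ 3 / 32) (hus : u ≤ 2 * s) :
    16 / 15 * (32 * a⁻¹ ^ 3 * u ^ 2 + u * (12 * a⁻¹ ^ 2 * u ^ 2)) ≤ 144 * a⁻¹ ^ 3 * s ^ 2 := by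
  have hs0 : 0 ≤ s := by linarith
  have hA : 0 < a⁻¹ := inv_pos.2 ha
  have hA3 : 0 < a⁻¹ ^ 3 := pow_pos hA 3
  have h1 : u * (12 * a⁻¹ ^ 2 * u ^ 2) ≤ a ^ 3 / 32 * (12 * a⁻¹ ^ 2) * u ^ 2 := by
    have := mul_le_mul_of_nonneg_right hu32 (by positivity : (0:ℝ) ≤ 12 * a⁻¹ ^ 2 * u ^ 2)
    nlinarith [this]
  have h2 : a ^ 3 / 32 * (12 * a⁻¹ ^ 2) = 3 / 8 * a := by
    field_simp
    ring
  have h3 : a ≤ 4 * a⁻¹ ^ 3 := by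
    have he : a ^ 4 * a⁻¹ ^ 3 = a := by
      field_simp
    nlinarith [mul_le_mul_of_nonneg_right ha4 hA3.le]
  have h4 : u ^ 2 ≤ 4 * s ^ 2 := by nlinarith
  have h5 : 32 * a⁻¹ ^ 3 * u ^ 2 + u * (12 * a⁻¹ ^ 2 * u ^ 2)
      ≤ (32 * a⁻¹ ^ 3 + 3 / 8 * a) * u ^ 2 := by
    rw [h2] at h1
    nlinarith [h1]
  have h6 : (32 * a⁻¹ ^ 3 + 3 / 8 * a) * u ^ 2 ≤ (32 * a⁻¹ ^ 3 + 3 / 2 * a⁻¹ ^ 3) * u ^ 2 := by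
    nlinarith [sq_nonneg u, h3]
  have h7 : (32 * a⁻¹ ^ 3 + 3 / 2 * a⁻¹ ^ 3) * u ^ 2 ≤ 36 * a⁻¹ ^ 3 * (4 * s ^ 2) := by
    nlinarith [mul_le_mul_of_nonneg_left h4 hA3.le, sq_nonneg u]
  nlinarith [h5, h6, h7]

end auxx

set_option maxHeartbeats 2000000 in
/-- The Cramér series function `λ(τ) = τ⁻³ (K(z₀(τ)) − τ z₀(τ) + τ²/2)` satisfies
`|λ(τ)| ≤ 700 α⁻³` for all `|τ| ≤ α³/64`; equivalently,
`|K(z₀(τ)) − τ z₀(τ) + τ²/2| ≤ 700 α⁻³ |τ|³` there. -/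
theorem stmt_17 {Ω : Type*} [MeasurableSpace Ω] {P : Measure Ω} [IsProbabilityMeasure P]
    (X : Ω → ℝ) (hmeas : Measurable X) (α : ℝ) (hα : 0 < α)
    (hmean : ∫ ω, X ω ∂P = 0) (hvar : ∫ ω, (X ω) ^ 2 ∂P = 1)
    (hexp : ∫⁻ ω, ENNReal.ofReal (Real.exp (α * |X ω|)) ∂P ≤ 2)
    (K : ℂ → ℂ)
    (hK : ∀ z : ℂ, K z = Complex.log (∫ ω, Complex.exp (z * X ω) ∂P))
    (z₀ : ℂ → ℂ)
    (hz₀ : ∀ τ : ℂ, ‖τ‖ ≤ α ^ 3 / 32 →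
      ‖z₀ τ‖ ≤ α ^ 3 / 16 ∧ deriv K (z₀ τ) = τ ∧ ‖z₀ τ‖ ≤ 2 * ‖τ‖)
    (hz₀an : AnalyticOnNhd ℂ z₀ {τ : ℂ | ‖τ‖ ≤ α ^ 3 / 32}) :
    ∀ τ : ℂ, ‖τ‖ ≤ α ^ 3 / 64 →
      ‖K (z₀ τ) - τ * z₀ τ + τ ^ 2 / 2‖ ≤ 700 * α⁻¹ ^ 3 * ‖τ‖ ^ 3 := by
  have hα' : α ≠ 0 := ne_of_gt hα
  set E : Ω → ℝ := fun ω => Real.exp (α * |X ω|) with hEdef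
  have hEnn : ∀ ω, 0 ≤ E ω := fun ω => (Real.exp_pos _).le
  have hEmeas : Measurable E := Real.measurable_exp.comp (measurable_const.mul hmeas.abs)
  have hEint : Integrable E P := by
    refine ⟨hEmeas.aestronglyMeasurable, ?_⟩
    rw [HasFiniteIntegral]
    calc ∫⁻ ω, ‖E ω‖₊ ∂P = ∫⁻ ω, ENNReal.ofReal (E ω) ∂P := by
          apply lintegral_congr; intro ω
          exact Real.enorm_eq_ofReal (hEnn ω)
      _ ≤ 2 := hexp
      _ < ⊤ := by norm_num
  have hEtot : ∫ ω, E ω ∂P ≤ 2 := by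
    have h1 : ENNReal.ofReal (∫ ω, E ω ∂P) = ∫⁻ ω, ENNReal.ofReal (E ω) ∂P :=
      ofReal_integral_eq_lintegral_ofReal hEint (ae_of_all _ hEnn)
    have h2 : ENNReal.ofReal (∫ ω, E ω ∂P) ≤ ENNReal.ofReal 2 := by
      rw [h1]; simpa using hexp
    exact (ENNReal.ofReal_le_ofReal_iff (by norm_num)).1 h2
  have hdom : ∀ (f : Ω → ℂ) (c : ℝ), AEStronglyMeasurable f P →
      (∀ ω, ‖f ω‖ ≤ c * E ω) → Integrable f P := fun f c hm hb =>
    (hEint.const_mul c).mono' hm (ae_of_all _ hb)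
  have hbnd : ∀ (f : Ω → ℂ) (c : ℝ), 0 ≤ c → (∀ ω, ‖f ω‖ ≤ c * E ω) →
      ‖∫ ω, f ω ∂P‖ ≤ 2 * c := by
    intro f c hc hb
    calc ‖∫ ω, f ω ∂P‖ ≤ ∫ ω, ‖f ω‖ ∂P := norm_integral_le_integral_norm f
      _ ≤ ∫ ω, c * E ω ∂P := integral_mono_of_nonneg
          (ae_of_all _ fun ω => norm_nonneg _) (hEint.const_mul c) (ae_of_all _ hb)
      _ = c * ∫ ω, E ω ∂P := integral_const_mul c E
      _ ≤ c * 2 := mul_le_mul_of_nonneg_left hEtot hc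
      _ = 2 * c := by ring
  -- norms of complex exponentials
  have hnormexp : ∀ (z : ℂ) (x : ℝ), ‖Complex.exp (z * x)‖ = Real.exp (z.re * x) := by
    intro z x
    rw [Complex.norm_exp]
    norm_num [Complex.mul_re]
  have hre_le : ∀ (z : ℂ) (x : ℝ), z.re * x ≤ ‖z‖ * |x| := by
    intro z x
    calc z.re * x ≤ |z.re * x| := le_abs_self _
      _ = |z.re| * |x| := abs_mul _ _
      _ ≤ ‖z‖ * |x| := mul_le_mul_of_nonneg_right
          (by exact Complex.abs_re_le_norm z) (abs_nonneg x)
  have hXnorm : ∀ ω, ‖(X ω : ℂ)‖ = |X ω| := fun ω => by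
    simp
  -- integrability of basic functions
  have hIX : Integrable (fun ω => (X ω : ℂ)) P := by
    refine hdom _ α⁻¹ (Complex.measurable_ofReal.comp hmeas).aestronglyMeasurable fun ω => ?_
    rw [hXnorm]
    have h1 : α * |X ω| ≤ Real.exp (α * |X ω|) := aux_le_exp (by positivity)
    rw [hEdef]
    calc |X ω| = α⁻¹ * (α * |X ω|) := by field_simp
      _ ≤ α⁻¹ * Real.exp (α * |X ω|) := by
          exact mul_le_mul_of_nonneg_left h1 (by positivity)
  have hIX2C : Integrable (fun ω => (X ω : ℂ) ^ 2) P := by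
    refine hdom _ (2 * α⁻¹ ^ 2)
      ((Complex.measurable_ofReal.comp hmeas).pow_const 2).aestronglyMeasurable fun ω => ?_
    rw [norm_pow, hXnorm]
    have h1 : (α * |X ω|) ^ 2 ≤ 2 * Real.exp (α * |X ω|) := aux_sq_le (by positivity)
    rw [hEdef]
    calc |X ω| ^ 2 = α⁻¹ ^ 2 * (α * |X ω|) ^ 2 := by
          field_simp
      _ ≤ α⁻¹ ^ 2 * (2 * Real.exp (α * |X ω|)) := by
          exact mul_le_mul_of_nonneg_left h1 (by positivity)
      _ = 2 * α⁻¹ ^ 2 * Real.exp (α * |X ω|) := by ring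
  have hIX2R : Integrable (fun ω => (X ω) ^ 2) P := by
    have h := hIX2C.re
    simpa [← Complex.ofReal_pow] using h
  -- α is small : α ^ 2 ≤ 2
  have hα2 : α ^ 2 ≤ 2 := by
    have hpt : ∀ ω, α ^ 2 / 2 * (X ω) ^ 2 + 1 ≤ E ω := by
      intro ω
      have h1 := Real.quadratic_le_exp_of_nonneg (show 0 ≤ α * |X ω| by positivity)
      have h2 : (α * |X ω|) ^ 2 = α ^ 2 * (X ω) ^ 2 := by
        rw [mul_pow, sq_abs]
      rw [hEdef]
      nlinarith [abs_nonneg (X ω), hα.le]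
    have hint : Integrable (fun ω => α ^ 2 / 2 * (X ω) ^ 2 + 1) P :=
      (hIX2R.const_mul _).add (integrable_const 1)
    have h3 : ∫ ω, (α ^ 2 / 2 * (X ω) ^ 2 + 1) ∂P ≤ ∫ ω, E ω ∂P :=
      integral_mono hint hEint hpt
    rw [integral_add (hIX2R.const_mul _) (integrable_const 1), integral_const_mul, hvar] at h3
    simp at h3
    linarith
  have hα4 : α ^ 4 ≤ 4 := by nlinarith
  have hα316 : α ^ 3 / 32 ≤ α / 16 := by nlinarith
  -- integrability of exponentials
  have hIexp : ∀ z : ℂ, ‖z‖ ≤ α → Integrable (fun ω => Complex.exp (z * X ω)) P := by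
    intro z hz
    refine hdom _ 1
      (measurable_const.mul (Complex.measurable_ofReal.comp hmeas)).cexp.aestronglyMeasurable
      fun ω => ?_
    rw [hnormexp, one_mul, hEdef]
    refine Real.exp_le_exp.2 (le_trans (hre_le z (X ω)) ?_)
    exact mul_le_mul_of_nonneg_right hz (abs_nonneg _)
  have hXexpB : ∀ z : ℂ, ‖z‖ ≤ 9 * α / 16 → ∀ ω,
      ‖(X ω : ℂ) * Complex.exp (z * X ω)‖ ≤ 3 * α⁻¹ * E ω := by
    intro z hz ω
    rw [norm_mul, hXnorm, hnormexp, hEdef]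
    have h1 : Real.exp (z.re * X ω) ≤ Real.exp (9 * (α * |X ω|) / 16) := by
      refine Real.exp_le_exp.2 (le_trans (hre_le z (X ω)) ?_)
      calc ‖z‖ * |X ω| ≤ 9 * α / 16 * |X ω| := mul_le_mul_of_nonneg_right hz (abs_nonneg _)
        _ = 9 * (α * |X ω|) / 16 := by ring
    have h2 := aux_mul1 (t := α * |X ω|) (by positivity)
    calc |X ω| * Real.exp (z.re * X ω) ≤ |X ω| * Real.exp (9 * (α * |X ω|) / 16) :=
          mul_le_mul_of_nonneg_left h1 (abs_nonneg _)
      _ = α⁻¹ * (α * |X ω| * Real.exp (9 * (α * |X ω|) / 16)) := by field_simp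
      _ ≤ α⁻¹ * (3 * Real.exp (α * |X ω|)) := by
          exact mul_le_mul_of_nonneg_left h2 (by positivity)
      _ = 3 * α⁻¹ * Real.exp (α * |X ω|) := by ring
  have hIXexp : ∀ z : ℂ, ‖z‖ ≤ 9 * α / 16 →
      Integrable (fun ω => (X ω : ℂ) * Complex.exp (z * X ω)) P := by
    intro z hz
    exact hdom _ (3 * α⁻¹) ((Complex.measurable_ofReal.comp hmeas).mul
      (measurable_const.mul (Complex.measurable_ofReal.comp hmeas)).cexp).aestronglyMeasurable
      (hXexpB z hz)
  set M : ℂ → ℂ := fun z => ∫ ω, Complex.exp (z * X ω) ∂P with hMdef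
  set M₁ : ℂ → ℂ := fun z => ∫ ω, (X ω : ℂ) * Complex.exp (z * X ω) ∂P with hM₁def
  have hM0 : M 0 = 1 := by
    rw [hMdef]
    simp
  have hMd : ∀ w : ℂ, ‖w‖ ≤ α / 16 → HasDerivAt M (M₁ w) w := by
    intro w hw
    have key := hasDerivAt_integral_of_dominated_loc_of_deriv_le (μ := P)
      (F := fun z ω => Complex.exp (z * X ω))
      (F' := fun z ω => (X ω : ℂ) * Complex.exp (z * X ω))
      (x₀ := w) (s := Metric.ball w (α / 2)) (bound := fun ω => 3 * α⁻¹ * E ω)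
      (Metric.ball_mem_nhds w (by positivity))
      (Filter.Eventually.of_forall fun z =>
        (measurable_const.mul (Complex.measurable_ofReal.comp hmeas)).cexp.aestronglyMeasurable)
      (hIexp w (le_trans hw (by linarith)))
      ((Complex.measurable_ofReal.comp hmeas).mul
        (measurable_const.mul (Complex.measurable_ofReal.comp hmeas)).cexp).aestronglyMeasurable
      (ae_of_all _ fun ω z hz => by
        refine hXexpB z ?_ ω
        have h1 : ‖z - w‖ < α / 2 := by
          simpa [dist_eq_norm] using hz
        calc ‖z‖ = ‖z - w + w‖ := by rw [sub_add_cancel]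
          _ ≤ ‖z - w‖ + ‖w‖ := norm_add_le _ _
          _ ≤ 9 * α / 16 := by linarith)
      (hEint.const_mul _)
      (ae_of_all _ fun ω z hz => by
        have h := ((hasDerivAt_id z).mul_const ((X ω : ℂ))).cexp
        simpa [mul_comm] using h)
    exact key.2
  -- complex moments
  have hX0C : ∫ ω, (X ω : ℂ) ∂P = 0 := by
    have h : ∫ ω, (X ω : ℂ) ∂P = ((∫ ω, X ω ∂P : ℝ) : ℂ) := integral_ofReal
    rw [h, hmean, Complex.ofReal_zero]
  have hX2C : ∫ ω, (X ω : ℂ) ^ 2 ∂P = 1 := by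
    have h1 : ∀ ω, (X ω : ℂ) ^ 2 = ((X ω ^ 2 : ℝ) : ℂ) := fun ω => by push_cast; ring
    rw [integral_congr_ae (ae_of_all _ h1)]
    have h : ∫ ω, ((X ω ^ 2 : ℝ) : ℂ) ∂P = ((∫ ω, X ω ^ 2 ∂P : ℝ) : ℂ) := integral_ofReal
    rw [h, hvar, Complex.ofReal_one]
  -- quadratic bounds on M and M₁
  have hMsub : ∀ z : ℂ, ‖z‖ ≤ α ^ 3 / 32 → ‖M z - 1‖ ≤ 12 * α⁻¹ ^ 2 * ‖z‖ ^ 2 := by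
    intro z hz
    have hzα : ‖z‖ ≤ α / 16 := le_trans hz hα316
    have hIe := hIexp z (le_trans hzα (by linarith))
    have hIzX : Integrable (fun ω => (1 : ℂ) + z * X ω) P :=
      (integrable_const 1).add (hIX.const_mul z)
    have h1 : ∀ ω, Complex.exp (z * X ω) - 1 - z * X ω
        = Complex.exp (z * X ω) - (1 + z * X ω) := fun ω => by ring
    have heq : M z - 1 = ∫ ω, (Complex.exp (z * X ω) - 1 - z * X ω) ∂P := by
      rw [integral_congr_ae (ae_of_all _ h1), integral_sub hIe hIzX,
        integral_add (integrable_const 1) (hIX.const_mul z), integral_const_mul, hX0C]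
      simp [hMdef, measure_univ]
    rw [heq]
    have hpt : ∀ ω, ‖Complex.exp (z * X ω) - 1 - z * X ω‖ ≤ 6 * α⁻¹ ^ 2 * ‖z‖ ^ 2 * E ω := by
      intro ω
      have h1' := aux_cexp_rem (z * X ω)
      have h2 : ‖z * (X ω : ℂ)‖ = ‖z‖ * |X ω| := by rw [norm_mul, hXnorm]
      rw [h2] at h1'
      have h3 : Real.exp (‖z‖ * |X ω|) ≤ Real.exp (α * |X ω| / 16) := by
        refine Real.exp_le_exp.2 ?_
        calc ‖z‖ * |X ω| ≤ α / 16 * |X ω| := mul_le_mul_of_nonneg_right hzα (abs_nonneg _)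
          _ = α * |X ω| / 16 := by ring
      have h4 := aux_mul2 (t := α * |X ω|) (by positivity)
      calc ‖Complex.exp (z * X ω) - 1 - z * X ω‖
          ≤ 2 * (‖z‖ * |X ω|) ^ 2 * Real.exp (‖z‖ * |X ω|) := h1'
        _ ≤ 2 * (‖z‖ * |X ω|) ^ 2 * Real.exp (α * |X ω| / 16) := by
            exact mul_le_mul_of_nonneg_left h3 (by positivity)
        _ = 2 * ‖z‖ ^ 2 * α⁻¹ ^ 2 * ((α * |X ω|) ^ 2 * Real.exp (α * |X ω| / 16)) := by
            field_simp
        _ ≤ 2 * ‖z‖ ^ 2 * α⁻¹ ^ 2 * (3 * Real.exp (α * |X ω|)) := by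
            exact mul_le_mul_of_nonneg_left h4 (by positivity)
        _ = 6 * α⁻¹ ^ 2 * ‖z‖ ^ 2 * E ω := by
            simp only [hEdef]
            ring
    have hfin := hbnd _ (6 * α⁻¹ ^ 2 * ‖z‖ ^ 2) (by positivity) hpt
    calc ‖∫ ω, (Complex.exp (z * X ω) - 1 - z * X ω) ∂P‖
        ≤ 2 * (6 * α⁻¹ ^ 2 * ‖z‖ ^ 2) := hfin
      _ = 12 * α⁻¹ ^ 2 * ‖z‖ ^ 2 := by ring
  have hM₁sub : ∀ z : ℂ, ‖z‖ ≤ α ^ 3 / 32 → ‖M₁ z - z‖ ≤ 32 * α⁻¹ ^ 3 * ‖z‖ ^ 2 := by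
    intro z hz
    have hzα : ‖z‖ ≤ α / 16 := le_trans hz hα316
    have hIXe := hIXexp z (le_trans hzα (by linarith))
    have hI2 : Integrable (fun ω => (X ω : ℂ) + z * (X ω : ℂ) ^ 2) P :=
      hIX.add (hIX2C.const_mul z)
    have h1 : ∀ ω, (X ω : ℂ) * (Complex.exp (z * X ω) - 1 - z * X ω)
        = (X ω : ℂ) * Complex.exp (z * X ω) - ((X ω : ℂ) + z * (X ω : ℂ) ^ 2) :=
      fun ω => by ring
    have heq : M₁ z - z = ∫ ω, ((X ω : ℂ) * (Complex.exp (z * X ω) - 1 - z * X ω)) ∂P := by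
      rw [integral_congr_ae (ae_of_all _ h1), integral_sub hIXe hI2,
        integral_add hIX (hIX2C.const_mul z), integral_const_mul, hX0C, hX2C]
      simp [hM₁def]
    rw [heq]
    have hpt : ∀ ω, ‖(X ω : ℂ) * (Complex.exp (z * X ω) - 1 - z * X ω)‖
        ≤ 16 * α⁻¹ ^ 3 * ‖z‖ ^ 2 * E ω := by
      intro ω
      have h1' := aux_cexp_rem (z * X ω)
      have h2 : ‖z * (X ω : ℂ)‖ = ‖z‖ * |X ω| := by rw [norm_mul, hXnorm]
      rw [h2] at h1'
      have h3 : Real.exp (‖z‖ * |X ω|) ≤ Real.exp (α * |X ω| / 16) := by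
        refine Real.exp_le_exp.2 ?_
        calc ‖z‖ * |X ω| ≤ α / 16 * |X ω| := mul_le_mul_of_nonneg_right hzα (abs_nonneg _)
          _ = α * |X ω| / 16 := by ring
      have h4 := aux_mul3 (t := α * |X ω|) (by positivity)
      calc ‖(X ω : ℂ) * (Complex.exp (z * X ω) - 1 - z * X ω)‖
          = |X ω| * ‖Complex.exp (z * X ω) - 1 - z * X ω‖ := by rw [norm_mul, hXnorm]
        _ ≤ |X ω| * (2 * (‖z‖ * |X ω|) ^ 2 * Real.exp (‖z‖ * |X ω|)) :=
            mul_le_mul_of_nonneg_left h1' (abs_nonneg _)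
        _ ≤ |X ω| * (2 * (‖z‖ * |X ω|) ^ 2 * Real.exp (α * |X ω| / 16)) := by
            refine mul_le_mul_of_nonneg_left ?_ (abs_nonneg _)
            exact mul_le_mul_of_nonneg_left h3 (by positivity)
        _ = 2 * ‖z‖ ^ 2 * α⁻¹ ^ 3 * ((α * |X ω|) ^ 3 * Real.exp (α * |X ω| / 16)) := by
            field_simp
        _ ≤ 2 * ‖z‖ ^ 2 * α⁻¹ ^ 3 * (8 * Real.exp (α * |X ω|)) := by
            exact mul_le_mul_of_nonneg_left h4 (by positivity)
        _ = 16 * α⁻¹ ^ 3 * ‖z‖ ^ 2 * E ω := by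
            simp only [hEdef]
            ring
    have hfin := hbnd _ (16 * α⁻¹ ^ 3 * ‖z‖ ^ 2) (by positivity) hpt
    calc ‖∫ ω, ((X ω : ℂ) * (Complex.exp (z * X ω) - 1 - z * X ω)) ∂P‖
        ≤ 2 * (16 * α⁻¹ ^ 3 * ‖z‖ ^ 2) := hfin
      _ = 32 * α⁻¹ ^ 3 * ‖z‖ ^ 2 := by ring
  -- the saddle point relation and the quadratic bound on σ - z₀ σ
  have hKfun : K = fun z => Complex.log (M z) := funext fun z => hK z
  have hp3 : (0:ℝ) < α ^ 3 := pow_pos hα 3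
  have hα364 : α ^ 3 / 64 ≤ α ^ 3 / 32 := by linarith
  have hmain : ∀ σ : ℂ, ‖σ‖ ≤ α ^ 3 / 64 →
      HasDerivAt K σ (z₀ σ) ∧ ‖σ - z₀ σ‖ ≤ 144 * α⁻¹ ^ 3 * ‖σ‖ ^ 2 := by
    intro σ hσ
    obtain ⟨hz1, hz2, hz3⟩ := hz₀ σ (le_trans hσ hα364)
    have hw32 : ‖z₀ σ‖ ≤ α ^ 3 / 32 := by
      calc ‖z₀ σ‖ ≤ 2 * ‖σ‖ := hz3
        _ ≤ 2 * (α ^ 3 / 64) := by linarith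
        _ = α ^ 3 / 32 := by ring
    have hw16 : ‖z₀ σ‖ ≤ α / 16 := le_trans hw32 hα316
    have hM1 : ‖M (z₀ σ) - 1‖ ≤ 12 * α⁻¹ ^ 2 * ‖z₀ σ‖ ^ 2 := hMsub _ hw32
    have hsmall : 12 * α⁻¹ ^ 2 * ‖z₀ σ‖ ^ 2 ≤ 1 / 16 := by
      have h1 : ‖z₀ σ‖ ^ 2 ≤ (α ^ 3 / 32) ^ 2 := by nlinarith [norm_nonneg (z₀ σ)]
      have h2 : α⁻¹ ^ 2 * α ^ 2 = 1 := by field_simp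
      calc 12 * α⁻¹ ^ 2 * ‖z₀ σ‖ ^ 2 ≤ 12 * α⁻¹ ^ 2 * (α ^ 3 / 32) ^ 2 := by
            exact mul_le_mul_of_nonneg_left h1 (by positivity)
        _ = 12 * (α⁻¹ ^ 2 * α ^ 2) * α ^ 4 / 1024 := by ring
        _ = 12 * α ^ 4 / 1024 := by rw [h2]; ring
        _ ≤ 12 * 4 / 1024 := by linarith
        _ ≤ 1 / 16 := by norm_num
    have hMre : (15:ℝ) / 16 ≤ (M (z₀ σ)).re := by
      have h1 : |(M (z₀ σ) - 1).re| ≤ ‖M (z₀ σ) - 1‖ := by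
        exact Complex.abs_re_le_norm _
      have h2 : (M (z₀ σ) - 1).re = (M (z₀ σ)).re - 1 := by simp
      have h3 := (abs_le.1 h1).1
      rw [h2] at h3
      linarith
    have hslit : M (z₀ σ) ∈ Complex.slitPlane :=
      Complex.mem_slitPlane_iff.2 (Or.inl (by linarith))
    have hMnorm : (15:ℝ) / 16 ≤ ‖M (z₀ σ)‖ := by
      refine le_trans hMre (le_trans (Complex.re_le_norm _) ?_)
      exact le_rfl
    have hMne : M (z₀ σ) ≠ 0 := by
      intro h
      rw [h] at hMnorm
      simp at hMnorm
      linarith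
    have hKd : HasDerivAt K ((M (z₀ σ))⁻¹ * M₁ (z₀ σ)) (z₀ σ) := by
      rw [hKfun]
      exact (Complex.hasDerivAt_log hslit).comp (z₀ σ) (hMd _ hw16)
    have hderiv_eq : σ = (M (z₀ σ))⁻¹ * M₁ (z₀ σ) := hz2.symm.trans hKd.deriv
    refine ⟨?_, ?_⟩
    · have hh := hKd.differentiableAt.hasDerivAt
      rwa [hz2] at hh
    have hM₁w : ‖M₁ (z₀ σ) - z₀ σ‖ ≤ 32 * α⁻¹ ^ 3 * ‖z₀ σ‖ ^ 2 := hM₁sub _ hw32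
    have hfact : σ - z₀ σ = (M (z₀ σ))⁻¹ * (M₁ (z₀ σ) - z₀ σ * M (z₀ σ)) := by
      have hx : (M (z₀ σ))⁻¹ * (M₁ (z₀ σ) - z₀ σ * M (z₀ σ))
          = (M (z₀ σ))⁻¹ * M₁ (z₀ σ) - z₀ σ := by
        field_simp
      rw [hx, ← hderiv_eq]
    have hnorm1 : ‖M₁ (z₀ σ) - z₀ σ * M (z₀ σ)‖
        ≤ ‖M₁ (z₀ σ) - z₀ σ‖ + ‖z₀ σ‖ * ‖M (z₀ σ) - 1‖ := by
      calc ‖M₁ (z₀ σ) - z₀ σ * M (z₀ σ)‖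
          = ‖(M₁ (z₀ σ) - z₀ σ) - z₀ σ * (M (z₀ σ) - 1)‖ := by ring_nf
        _ ≤ ‖M₁ (z₀ σ) - z₀ σ‖ + ‖z₀ σ * (M (z₀ σ) - 1)‖ := norm_sub_le _ _
        _ = ‖M₁ (z₀ σ) - z₀ σ‖ + ‖z₀ σ‖ * ‖M (z₀ σ) - 1‖ := by rw [norm_mul]
    have hMinv : ‖(M (z₀ σ))⁻¹‖ ≤ 16 / 15 := by
      rw [norm_inv]
      calc ‖M (z₀ σ)‖⁻¹ ≤ ((15:ℝ) / 16)⁻¹ := by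
            exact inv_anti₀ (by norm_num) hMnorm
        _ = 16 / 15 := by norm_num
    calc ‖σ - z₀ σ‖ = ‖(M (z₀ σ))⁻¹‖ * ‖M₁ (z₀ σ) - z₀ σ * M (z₀ σ)‖ := by
          rw [hfact, norm_mul]
      _ ≤ 16 / 15 * (‖M₁ (z₀ σ) - z₀ σ‖ + ‖z₀ σ‖ * ‖M (z₀ σ) - 1‖) := by
          exact mul_le_mul hMinv hnorm1 (norm_nonneg _) (by norm_num)
      _ ≤ 16 / 15 * (32 * α⁻¹ ^ 3 * ‖z₀ σ‖ ^ 2 + ‖z₀ σ‖ * (12 * α⁻¹ ^ 2 * ‖z₀ σ‖ ^ 2)) := by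
          gcongr
      _ ≤ 144 * α⁻¹ ^ 3 * ‖σ‖ ^ 2 := aux_const hα hα4 (norm_nonneg _) hw32 hz3
  -- values at 0
  have hz₀0 : z₀ 0 = 0 := by
    have h00 := (hz₀ 0 (by simp; positivity)).2.2
    have h01 : ‖z₀ 0‖ ≤ 0 := by simpa using h00
    exact norm_le_zero_iff.1 h01
  have hK0 : K 0 = 0 := by
    have h : K 0 = Complex.log (M 0) := hK 0
    rw [h, hM0, Complex.log_one]
  -- mean value argument on the closed ball of radius ‖τ‖
  intro τ hτ
  have hders : ∀ σ ∈ Metric.closedBall (0:ℂ) ‖τ‖,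
      HasDerivWithinAt (fun σ : ℂ => K (z₀ σ) - σ * z₀ σ + σ ^ 2 / 2) (σ - z₀ σ)
        (Metric.closedBall (0:ℂ) ‖τ‖) σ := by
    intro σ hσ
    have hσn : ‖σ‖ ≤ α ^ 3 / 64 := by
      have := Metric.mem_closedBall.1 hσ
      rw [dist_zero_right] at this
      linarith
    have hKσ : HasDerivAt K σ (z₀ σ) := (hmain σ hσn).1
    have han : AnalyticAt ℂ z₀ σ := hz₀an σ (by
      simp only [Set.mem_setOf_eq]
      linarith)
    have hz : HasDerivAt z₀ (deriv z₀ σ) σ := han.differentiableAt.hasDerivAt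
    have h1 : HasDerivAt (fun σ => K (z₀ σ)) (σ * deriv z₀ σ) σ := by
      have := hKσ.comp σ hz
      exact this
    have h2 : HasDerivAt (fun σ : ℂ => σ * z₀ σ) (1 * z₀ σ + σ * deriv z₀ σ) σ :=
      (hasDerivAt_id σ).mul hz
    have h4 := (h1.sub h2).add ((hasDerivAt_pow 2 σ).div_const 2)
    have h5 : HasDerivAt (fun σ : ℂ => K (z₀ σ) - σ * z₀ σ + σ ^ 2 / 2) (σ - z₀ σ) σ := by
      refine HasDerivAt.congr_deriv h4 ?_
      rw [show (2:ℕ) - 1 = 1 from rfl]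
      push_cast
      ring
    exact h5.hasDerivWithinAt
  have hbound : ∀ σ ∈ Metric.closedBall (0:ℂ) ‖τ‖,
      ‖σ - z₀ σ‖ ≤ 144 * α⁻¹ ^ 3 * ‖τ‖ ^ 2 := by
    intro σ hσ
    have hσn : ‖σ‖ ≤ ‖τ‖ := by
      have := Metric.mem_closedBall.1 hσ
      rwa [dist_zero_right] at this
    refine le_trans (hmain σ (le_trans hσn hτ)).2 ?_
    have h : ‖σ‖ ^ 2 ≤ ‖τ‖ ^ 2 := by nlinarith [norm_nonneg σ]
    nlinarith [pow_pos (inv_pos.2 hα) 3]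
  have key := Convex.norm_image_sub_le_of_norm_hasDerivWithin_le
      (f := fun σ : ℂ => K (z₀ σ) - σ * z₀ σ + σ ^ 2 / 2) (f' := fun σ : ℂ => σ - z₀ σ)
      (C := 144 * α⁻¹ ^ 3 * ‖τ‖ ^ 2) (x := (0:ℂ)) (y := τ)
      hders hbound (convex_closedBall _ _)
      (Metric.mem_closedBall_self (norm_nonneg τ))
      (by rw [Metric.mem_closedBall, dist_zero_right] : τ ∈ Metric.closedBall (0:ℂ) ‖τ‖)
  simp only [hz₀0, hK0, mul_zero, zero_mul, sub_zero] at key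
  have hzero : (0:ℂ) - 0 * 0 + 0 ^ 2 / 2 = 0 := by norm_num
  calc ‖K (z₀ τ) - τ * z₀ τ + τ ^ 2 / 2‖
      ≤ 144 * α⁻¹ ^ 3 * ‖τ‖ ^ 2 * ‖τ‖ := by
        have := key
        simpa using this
    _ = 144 * α⁻¹ ^ 3 * ‖τ‖ ^ 3 := by ring
    _ ≤ 700 * α⁻¹ ^ 3 * ‖τ‖ ^ 3 := by
        nlinarith [pow_pos (inv_pos.2 hα) 3, pow_nonneg (norm_nonneg τ) 3]
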